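/- Threshold greedy optimality under a binding ROS constraint: let μ ∈ [0,n]^m be a fractional strategy with Σ_j c_j(μ_j) = T·Σ_j v_j(μ_j) and Σ_j c_j(μ_j) ≤ B, and suppose there exists t > T such that for every platform j and every integer s ∈ {1,…,n}: if s − 1 < μ_j then MC_j(s) ≤ t, and if s > μ_j then MC_j(s) ≥ t. Then every feasible fractional strategy μ^a ∈ [0,n]^m (i.e., with Σ_j c_j(μ^a_j) ≤ T·Σ_j v_j(μ^a_j) and Σ_j c_j(μ^a_j) ≤ B) satisfies Σ_j v_j(μ^a_j) ≤ Σ_j v_j(μ_j). -/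
import Mathlib


/-- The marginal cost of bid level `s ≥ 1`:
`MC(s) = (c(s) − c(s−1)) / (v(s) − v(s−1))`. -/
noncomputable def MC (c v : ℕ → ℝ) (μ : ℕ) : ℝ :=
  (c μ - c (μ - 1)) / (v μ - v (μ - 1))

/-- Linear interpolation of `f : ℕ → ℝ` to nonnegative reals:
for `⌊x⌋ ≤ x ≤ ⌊x⌋ + 1`,
`interp f x = (⌈x⌉ − x)·f(⌊x⌋) + (x − ⌊x⌋)·f(⌈x⌉)`. -/
noncomputable def interp (f : ℕ → ℝ) (x : ℝ) : ℝ :=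
  f ⌊x⌋₊ + (x - ⌊x⌋₊) * (f (⌊x⌋₊ + 1) - f ⌊x⌋₊)

/-- Threshold greedy optimality under a binding ROS constraint: if
`Σ c(μ) = T·Σ v(μ)`, the budget constraint holds at `μ`, and there is a
threshold `t > T` such that every marginal step used by `μ` has `MC ≤ t` and
every unused step has `MC ≥ t`, then `μ` attains the maximum total value among
all feasible fractional strategies. -/
lemma interp_min (f : ℕ → ℝ) (n : ℕ) (μ x : ℝ)
    (hμ0 : 0 ≤ μ) (hμn : μ ≤ n) (hx0 : 0 ≤ x) (hxn : x ≤ n)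
    (hdown : ∀ s : ℕ, 1 ≤ s → s ≤ n → (s : ℝ) - 1 < μ → f s ≤ f (s - 1))
    (hup : ∀ s : ℕ, 1 ≤ s → s ≤ n → μ < (s : ℝ) → f (s - 1) ≤ f s) :
    interp f μ ≤ interp f x := by
  set k := ⌊μ⌋₊ with hk
  have hk1 : (k : ℝ) ≤ μ := Nat.floor_le hμ0
  have hk2 : μ < (k : ℝ) + 1 := Nat.lt_floor_add_one μ
  have hkn : k ≤ n := by
    have : (k : ℝ) ≤ (n : ℝ) := le_trans hk1 hμn
    exact_mod_cast this
  -- decreasing up to k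
  have hdec : ∀ d b : ℕ, b + d ≤ k → f (b + d) ≤ f b := by
    intro d
    induction d with
    | zero => intro b _; simp
    | succ d ih =>
      intro b hbd
      have h1 : f (b + d + 1) ≤ f (b + d) := by
        have := hdown (b + d + 1) (by omega) (by omega) ?_
        · simpa using this
        · push_cast
          have : ((b + d : ℕ) : ℝ) < (k : ℝ) := by exact_mod_cast (by omega : b + d < k)
          push_cast at this
          linarith
      have h2 : f (b + d) ≤ f b := ih b (by omega)
      calc f (b + (d + 1)) = f (b + d + 1) := by ring_nf
        _ ≤ f (b + d) := h1
        _ ≤ f b := h2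
  -- increasing after μ
  have hinc : ∀ d b : ℕ, μ ≤ (b : ℝ) → b + d ≤ n → f b ≤ f (b + d) := by
    intro d
    induction d with
    | zero => intro b _ _; simp
    | succ d ih =>
      intro b hb hbd
      have h2 : f b ≤ f (b + d) := ih b hb (by omega)
      have h1 : f (b + d) ≤ f (b + d + 1) := by
        have := hup (b + d + 1) (by omega) (by omega) ?_
        · simpa using this
        · push_cast; linarith [Nat.cast_nonneg (α := ℝ) d]
      calc f b ≤ f (b + d) := h2
        _ ≤ f (b + d + 1) := h1
        _ = f (b + (d + 1)) := by ring_nf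
  have hmin : ∀ a : ℕ, a ≤ n → f k ≤ f a := by
    intro a ha
    rcases le_or_gt a k with hak | hka
    · have := hdec (k - a) a (by omega)
      have h' : a + (k - a) = k := by omega
      rw [h'] at this; exact this
    · -- a ≥ k + 1
      rcases eq_or_lt_of_le hk1 with hke | hke
      · -- μ = k
        have := hinc (a - k) k (le_of_eq hke.symm) (by omega)
        have h' : k + (a - k) = a := by omega
        rw [h'] at this; exact this
      · -- k < μ, so step k+1 is flat
        have hk1n : k + 1 ≤ n := by
          have : (k : ℝ) < (n : ℝ) := lt_of_lt_of_le hke hμn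
          have : k < n := by exact_mod_cast this
          omega
        have hflat1 : f (k + 1) ≤ f k := by
          have := hdown (k + 1) (by omega) hk1n (by push_cast; linarith)
          simpa using this
        have hflat2 : f k ≤ f (k + 1) := by
          have := hup (k + 1) (by omega) hk1n (by push_cast; linarith)
          simpa using this
        have := hinc (a - (k + 1)) (k + 1) (by push_cast; linarith) (by omega)
        have h' : k + 1 + (a - (k + 1)) = a := by omega
        rw [h'] at this
        linarith
  have heq : interp f μ = f k := by
    rcases eq_or_lt_of_le hk1 with hke | hke
    · simp [interp, ← hk, ← hke]
    · have hk1n : k + 1 ≤ n := by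
        have : (k : ℝ) < (n : ℝ) := lt_of_lt_of_le hke hμn
        have : k < n := by exact_mod_cast this
        omega
      have hflat1 : f (k + 1) ≤ f k := by
        have := hdown (k + 1) (by omega) hk1n (by push_cast; linarith)
        simpa using this
      have hflat2 : f k ≤ f (k + 1) := by
        have := hup (k + 1) (by omega) hk1n (by push_cast; linarith)
        simpa using this
      have : f (k + 1) = f k := le_antisymm hflat1 hflat2
      simp [interp, ← hk, this]
  rw [heq]
  -- now show f k ≤ interp f x
  set l := ⌊x⌋₊ with hl
  have hl1 : (l : ℝ) ≤ x := Nat.floor_le hx0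
  have hl2 : x < (l : ℝ) + 1 := Nat.lt_floor_add_one x
  have hln : l ≤ n := by
    have : (l : ℝ) ≤ (n : ℝ) := le_trans hl1 hxn
    exact_mod_cast this
  rcases eq_or_lt_of_le hl1 with hle | hle
  · have : interp f x = f l := by simp [interp, ← hl, ← hle]
    rw [this]; exact hmin l hln
  · have hl1n : l + 1 ≤ n := by
      have : (l : ℝ) < (n : ℝ) := lt_of_lt_of_le hle hxn
      have : l < n := by exact_mod_cast this
      omega
    have h1 := hmin l hln
    have h2 := hmin (l + 1) hl1n
    have hθ : 0 < x - (l : ℝ) := by linarith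
    have hθ1 : x - (l : ℝ) < 1 := by linarith
    simp only [interp, ← hl]
    push_cast
    nlinarith

lemma interp_sub (c v : ℕ → ℝ) (t x : ℝ) :
    interp (fun s => c s - t * v s) x = interp c x - t * interp v x := by
  simp only [interp]; ring

theorem threshold_greedy_optimal_ros_binding
    (m n : ℕ) (c v : Fin m → ℕ → ℝ)
    (hc0 : ∀ j, c j 0 = 0) (hv0 : ∀ j, v j 0 = 0)
    (hc : ∀ j, ∀ s < n, c j s < c j (s + 1)) (hv : ∀ j, ∀ s < n, v j s < v j (s + 1))
    (hmono : ∀ j, ∀ s, 1 ≤ s → s < n → MC (c j) (v j) s ≤ MC (c j) (v j) (s + 1))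
    (B T : ℝ) (hB : 0 ≤ B) (hT : 0 < T)
    (μ : Fin m → ℝ) (hbox : ∀ j, 0 ≤ μ j ∧ μ j ≤ n)
    (hbind : ∑ j, interp (c j) (μ j) = T * ∑ j, interp (v j) (μ j))
    (hbudget : ∑ j, interp (c j) (μ j) ≤ B)
    (t : ℝ) (ht : T < t)
    (hthresh : ∀ j, ∀ s : ℕ, 1 ≤ s → s ≤ n →
      (((s : ℝ) - 1 < μ j → MC (c j) (v j) s ≤ t) ∧
        (μ j < (s : ℝ) → t ≤ MC (c j) (v j) s)))
    (μa : Fin m → ℝ) (hboxa : ∀ j, 0 ≤ μa j ∧ μa j ≤ n)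
    (hrosa : ∑ j, interp (c j) (μa j) ≤ T * ∑ j, interp (v j) (μa j))
    (hBa : ∑ j, interp (c j) (μa j) ≤ B) :
    ∑ j, interp (v j) (μa j) ≤ ∑ j, interp (v j) (μ j) := by
  -- key per-platform inequality for f_j = c_j - t * v_j
  have key : ∀ j : Fin m,
      interp (c j) (μ j) - t * interp (v j) (μ j) ≤
        interp (c j) (μa j) - t * interp (v j) (μa j) := by
    intro j
    rw [← interp_sub, ← interp_sub]
    apply interp_min _ n _ _ (hbox j).1 (hbox j).2 (hboxa j).1 (hboxa j).2
    · intro s h1 hn hlt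
      have hvpos : 0 < v j s - v j (s - 1) := by
        have := hv j (s - 1) (by omega)
        have hs : s - 1 + 1 = s := by omega
        rw [hs] at this
        linarith
      have hmc := (hthresh j s h1 hn).1 hlt
      rw [MC, div_le_iff₀ hvpos] at hmc
      nlinarith
    · intro s h1 hn hlt
      have hvpos : 0 < v j s - v j (s - 1) := by
        have := hv j (s - 1) (by omega)
        have hs : s - 1 + 1 = s := by omega
        rw [hs] at this
        linarith
      have hmc := (hthresh j s h1 hn).2 hlt
      rw [MC, le_div_iff₀ hvpos] at hmc
      nlinarith
  have hsum : ∑ j, interp (c j) (μ j) - t * ∑ j, interp (v j) (μ j) ≤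
      ∑ j, interp (c j) (μa j) - t * ∑ j, interp (v j) (μa j) := by
    rw [Finset.mul_sum, Finset.mul_sum, ← Finset.sum_sub_distrib, ← Finset.sum_sub_distrib]
    exact Finset.sum_le_sum fun j _ => key j
  set Vμ := ∑ j, interp (v j) (μ j)
  set Va := ∑ j, interp (v j) (μa j)
  have h1 : (t - T) * Va ≤ (t - T) * Vμ := by linarith
  exact le_of_mul_le_mul_left h1 (by linarith)
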